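/- Let λ ∈ ℂ with |λ| = 1, λ not a root of unity and λ² ≠ 1; let φ be normalized and symmetric; let q* ∈ ℂ[[t]] with q*(t) = 1 + q₂*t² + ... and s₀ = (1+2q₂*)/4 ≠ 0. Define ψ, h, w as in the construction, Δφ = (w + w∘I)/2, R₃ = [z·∂_z(S_{q*}(φ⁻,φ))]/z − ∇⁺( h·Π(ψ/h) ), and R₄ = ∂_z(ℰ(q*,φ))·(w/φ_z) + R₃/φ_z. Then ℰ(q*,φ) + ∂_φℰ(q*,φ)(Δφ) = (1/2)·( R₄ + R₄∘I ). -/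

import Mathlib

/- Common setup: formal power series in two commuting variables `z, z̄` over `ℂ`,
represented by their coefficient functions, together with the operators of
Treschev's linearizable billiard construction. -/

open scoped BigOperators

noncomputable section

namespace Treschev

/-- A formal power series `f = Σ_{j,k≥0} f_{j,k} z^j z̄^k`, given by its coefficients. -/
abbrev FPS : Type := ℕ → ℕ → ℂ

/-- A formal power series in one variable `t`, given by its coefficients. -/
abbrev OPS : Type := ℕ → ℂ

/-- Product of two formal power series (Cauchy product). -/
def fmul (f g : FPS) : FPS := fun j k =>
  ∑ a ∈ Finset.range (j + 1), ∑ b ∈ Finset.range (k + 1), f a b * g (j - a) (k - b)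

/-- The constant series `1`. -/
def oneF : FPS := fun j k => if j = 0 ∧ k = 0 then 1 else 0

/-- Powers of a formal power series. -/
def fpow (f : FPS) : ℕ → FPS
  | 0 => oneF
  | n + 1 => fmul f (fpow f n)

/-- Substitution of a two-variable series `u` with zero constant term into a
one-variable series `q` (the formula is the correct one whenever `u 0 0 = 0`). -/
def substOne (q : OPS) (u : FPS) : FPS := fun j k =>
  ∑ m ∈ Finset.range (j + k + 1), q m * fpow u m j k

/-- Substitution `F(u, v)` of two series with zero constant term into a two-variable
series `F` (the formula is the correct one whenever `u 0 0 = 0` and `v 0 0 = 0`). -/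
def subst2 (F : FPS) (u v : FPS) : FPS := fun j k =>
  ∑ m ∈ Finset.range (j + k + 1), ∑ n ∈ Finset.range (j + k + 1),
    F m n * fmul (fpow u m) (fpow v n) j k

/-- The Taylor series of `cos`. -/
def cosSeries : OPS := fun n => if n % 2 = 0 then (-1 : ℂ) ^ (n / 2) / (n.factorial : ℂ) else 0

/-- `(t₁ + t₂)/2` as a two-variable series. -/
def halfSum : FPS := fun j k =>
  if j = 1 ∧ k = 0 then (1 / 2 : ℂ) else if j = 0 ∧ k = 1 then (1 / 2 : ℂ) else 0

/-- `(t₁ − t₂)/2` as a two-variable series. -/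
def halfDiff : FPS := fun j k =>
  if j = 1 ∧ k = 0 then (1 / 2 : ℂ) else if j = 0 ∧ k = 1 then (-(1 / 2) : ℂ) else 0

/-- The generating function `S_q(t₁,t₂) = q((t₁+t₂)/2)·cos((t₁−t₂)/2)` as a
formal power series in `t₁, t₂`. -/
def Sq (q : OPS) : FPS := fmul (substOne q halfSum) (substOne cosSeries halfDiff)

/-- Formal partial derivative with respect to the first variable. -/
def d1 (f : FPS) : FPS := fun j k => ((j + 1 : ℕ) : ℂ) * f (j + 1) k

/-- Formal partial derivative with respect to the second variable. -/
def d2 (f : FPS) : FPS := fun j k => ((k + 1 : ℕ) : ℂ) * f j (k + 1)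

/-- `f⁺`, with `(f⁺)_{j,k} = λ^{j−k} f_{j,k}`. -/
def plus (l : ℂ) (f : FPS) : FPS := fun j k => l ^ ((j : ℤ) - (k : ℤ)) * f j k

/-- `f⁻`, with `(f⁻)_{j,k} = λ^{k−j} f_{j,k}`. -/
def minus (l : ℂ) (f : FPS) : FPS := fun j k => l ^ ((k : ℤ) - (j : ℤ)) * f j k

/-- `∇f = f⁻ − λ⁻¹ f`. -/
def nab (l : ℂ) (f : FPS) : FPS := minus l f - l⁻¹ • f

/-- `∇⁺f = f − λ f⁺`. -/
def nabPlus (l : ℂ) (f : FPS) : FPS := f - l • plus l f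

/-- The average `[f] = Σ_j f_{j,j} (z z̄)^j`. -/
def avg (f : FPS) : FPS := fun j k => if j = k then f j k else 0

/-- The projection `Π₊(f) = [z f]/z`. -/
def Pip (f : FPS) : FPS := fun j k => if k = j + 1 then f j k else 0

/-- The projection `Π(f) = [z̄ f]/z̄`. -/
def Pim (f : FPS) : FPS := fun j k => if j = k + 1 then f j k else 0

/-- `E⁺`, the partial inverse of `∇⁺`. -/
def Eplus (l : ℂ) (f : FPS) : FPS := fun j k =>
  if k = j + 1 then 0 else f j k / (1 - l ^ ((j : ℤ) - (k : ℤ) + 1))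

/-- `E`, the partial inverse of `∇`. -/
def Emin (l : ℂ) (f : FPS) : FPS := fun j k =>
  if j = k + 1 then 0 else f j k / (l ^ ((k : ℤ) - (j : ℤ)) - l⁻¹)

/-- `Ẽ`, with `Ẽ(f − f⁺) = f − [f]`. -/
def Etilde (l : ℂ) (f : FPS) : FPS := fun j k =>
  if j = k then 0 else f j k / (1 - l ^ ((j : ℤ) - (k : ℤ)))

/-- `f ∘ I`, where `I(z,z̄) = (z̄,z)`. -/
def swapI (f : FPS) : FPS := fun j k => f k j

/-- Multiplication by `z`. -/
def mulz (f : FPS) : FPS := fun j k => if j = 0 then 0 else f (j - 1) k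

/-- Multiplication by `z̄`. -/
def mulzbar (f : FPS) : FPS := fun j k => if k = 0 then 0 else f j (k - 1)

/-- Division by `z` (valid on series divisible by `z`). -/
def divz (f : FPS) : FPS := fun j k => f (j + 1) k

/-- Multiplicative inverse `1/h` (the geometric-series formula, which is the correct
inverse whenever `h 0 0 ≠ 0`). -/
def finv (h : FPS) : FPS := fun j k =>
  (h 0 0)⁻¹ * ∑ m ∈ Finset.range (j + k + 1),
    fpow (fun a b => if a = 0 ∧ b = 0 then 0 else -(h a b) * (h 0 0)⁻¹) m j k

/-- Quotient `f/h` of formal power series. -/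
def fdiv (f h : FPS) : FPS := fmul f (finv h)

/-- `ℰ(q,φ) = ∂₂S_q(φ⁻,φ) + ∂₁S_q(φ,φ⁺)`. -/
def Err (l : ℂ) (q : OPS) (φ : FPS) : FPS :=
  subst2 (d2 (Sq q)) (minus l φ) φ + subst2 (d1 (Sq q)) φ (plus l φ)

/-- `∂_φℰ(q,φ)(w) = ∂₁₂S_q(φ⁻,φ)w⁻ + ∂₂₂S_q(φ⁻,φ)w + ∂₁₁S_q(φ,φ⁺)w + ∂₁₂S_q(φ,φ⁺)w⁺`. -/
def dErr (l : ℂ) (q : OPS) (φ : FPS) (w : FPS) : FPS :=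
  fmul (subst2 (d1 (d2 (Sq q))) (minus l φ) φ) (minus l w)
    + fmul (subst2 (d2 (d2 (Sq q))) (minus l φ) φ) w
    + fmul (subst2 (d1 (d1 (Sq q))) φ (plus l φ)) w
    + fmul (subst2 (d1 (d2 (Sq q))) φ (plus l φ)) (plus l w)

/-- `h = ∂₁₂S_q(φ⁻,φ)·φ_z·φ_z⁻`. -/
def hFun (l : ℂ) (q : OPS) (φ : FPS) : FPS :=
  fmul (fmul (subst2 (d1 (d2 (Sq q))) (minus l φ) φ) (d1 φ)) (minus l (d1 φ))

/-- `ψ = −E⁺( ℰ(q,φ)·φ_z − Π₊(ℰ(q,φ)·φ_z) )`. -/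
def psiFun (l : ℂ) (q : OPS) (φ : FPS) : FPS :=
  -Eplus l (fmul (Err l q φ) (d1 φ) - Pip (fmul (Err l q φ) (d1 φ)))

/-- `w = φ_z·E( ψ/h − Π(ψ/h) )`. -/
def wFun (l : ℂ) (q : OPS) (φ : FPS) : FPS :=
  fmul (d1 φ)
    (Emin l (fdiv (psiFun l q φ) (hFun l q φ) - Pim (fdiv (psiFun l q φ) (hFun l q φ))))

/-- `κ = ∂₁₂S_q(φ⁻,φ)·(λ⁻¹ φ_z⁻ φ_z̄ − λ φ_z̄⁻ φ_z)`. -/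
def kappaFun (l : ℂ) (q : OPS) (φ : FPS) : FPS :=
  fmul (subst2 (d1 (d2 (Sq q))) (minus l φ) φ)
    (l⁻¹ • fmul (minus l (d1 φ)) (d2 φ) - l • fmul (minus l (d2 φ)) (d1 φ))

/-- `g = φ_z̄ / φ_z`. -/
def gFun (φ : FPS) : FPS := fdiv (d2 φ) (d1 φ)

/-- `R₁ = ( −[z̄·ℰ·φ_z̄] + [z̄·g·[z·ℰ·φ_z]/z] ) / ( λ·z·[κ] )`. -/
def R1Fun (l : ℂ) (q : OPS) (φ : FPS) : FPS :=
  l⁻¹ • fmul (finv (avg (kappaFun l q φ)))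
    (divz (-avg (mulzbar (fmul (Err l q φ) (d2 φ)))
      + avg (mulzbar (fmul (gFun φ) (divz (avg (mulz (fmul (Err l q φ) (d1 φ)))))))))

/-- `R₂ = (1/z)·[ z̄·ψ·(λ⁻¹g − λg⁻)·([κ]−κ)/(κ·[κ]) ]`. -/
def R2Fun (l : ℂ) (q : OPS) (φ : FPS) : FPS :=
  divz (avg (mulzbar
    (fmul (fmul (psiFun l q φ) (l⁻¹ • gFun φ - l • minus l (gFun φ)))
      (fmul (avg (kappaFun l q φ) - kappaFun l q φ)
        (finv (fmul (kappaFun l q φ) (avg (kappaFun l q φ))))))))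

/-- `R₃ = [z·∂_z(S_q(φ⁻,φ))]/z − ∇⁺( h·Π(ψ/h) )`. -/
def R3Fun (l : ℂ) (q : OPS) (φ : FPS) : FPS :=
  Pip (d1 (subst2 (Sq q) (minus l φ) φ))
    - nabPlus l (fmul (hFun l q φ) (Pim (fdiv (psiFun l q φ) (hFun l q φ))))

/-- `R₄ = ∂_z(ℰ(q,φ))·(w/φ_z) + R₃/φ_z`. -/
def R4Fun (l : ℂ) (q : OPS) (φ : FPS) : FPS :=
  fmul (d1 (Err l q φ)) (fdiv (wFun l q φ) (d1 φ)) + fdiv (R3Fun l q φ) (d1 φ)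

/-- `φ = z + z̄ + O₃`. -/
def normalized (φ : FPS) : Prop :=
  φ 0 0 = 0 ∧ φ 1 0 = 1 ∧ φ 0 1 = 1 ∧ φ 2 0 = 0 ∧ φ 1 1 = 0 ∧ φ 0 2 = 0

/-- The weighted norm `‖f‖_ρ = Σ_{j,k} |f_{j,k}| ρ^{j+k} ∈ [0,∞]`. -/
def wnorm (ρ : ℝ) (f : FPS) : ENNReal :=
  ∑' p : ℕ × ℕ, ENNReal.ofReal (‖f p.1 p.2‖ * ρ ^ (p.1 + p.2))

/-- `D(f) = Σ_{n≥1} n f_n (z z̄)^n` for a series in `z z̄`. -/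
def Dop (f : FPS) : FPS := fun j k => if j = k then (j : ℂ) * f j k else 0

/-- `D̄(f − f₀) = Σ_{n≥1} (f_n/n) (z z̄)^n` for a series in `z z̄`. -/
def Dbar (f : FPS) : FPS := fun j k => if j = k ∧ j ≠ 0 then f j k / (j : ℂ) else 0

/-- The constant part `f₀` of a series. -/
def constPart (f : FPS) : FPS := fun j k => if j = 0 ∧ k = 0 then f 0 0 else 0

/-- `ξ₀ = ((λ⁻¹+1)z + (λ+1)z̄)/2`. -/
def xi0 (l : ℂ) : FPS := fun a b =>
  if a = 1 ∧ b = 0 then (l⁻¹ + 1) / 2 else if a = 0 ∧ b = 1 then (l + 1) / 2 else 0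

/-! ### Auxiliary infrastructure: embedding into iterated power series -/

/-- Embed an `FPS` into `ℂ⟦X⟧⟦X⟧`. -/
def toR (f : FPS) : PowerSeries (PowerSeries ℂ) :=
  PowerSeries.mk fun j => PowerSeries.mk fun k => f j k

lemma coeff_toR (f : FPS) (j k : ℕ) :
    PowerSeries.coeff k (PowerSeries.coeff j (toR f)) = f j k := by
  simp [toR]

lemma toR_inj {f g : FPS} (h : toR f = toR g) : f = g := by
  funext j k
  rw [← coeff_toR f j k, ← coeff_toR g j k, h]

lemma toR_add (f g : FPS) : toR (f + g) = toR f + toR g := by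
  apply PowerSeries.ext; intro j
  apply PowerSeries.ext; intro k
  simp [coeff_toR, toR]

lemma toR_sub (f g : FPS) : toR (f - g) = toR f - toR g := by
  apply PowerSeries.ext; intro j
  apply PowerSeries.ext; intro k
  simp [coeff_toR, toR]

lemma toR_neg (f : FPS) : toR (-f) = -toR f := by
  apply PowerSeries.ext; intro j
  apply PowerSeries.ext; intro k
  simp [coeff_toR, toR]

lemma toR_smul (c : ℂ) (f : FPS) :
    toR (c • f) = PowerSeries.C (PowerSeries.C c : PowerSeries ℂ) * toR f := by
  apply PowerSeries.ext; intro j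
  apply PowerSeries.ext; intro k
  simp [toR, PowerSeries.coeff_C_mul, smul_eq_mul]

lemma toR_one : toR oneF = 1 := by
  apply PowerSeries.ext; intro j
  apply PowerSeries.ext; intro k
  by_cases hj : j = 0 <;> by_cases hk : k = 0 <;>
    simp [toR, oneF, hj, hk, PowerSeries.coeff_one]

lemma toR_fmul (f g : FPS) : toR (fmul f g) = toR f * toR g := by
  apply PowerSeries.ext; intro j
  apply PowerSeries.ext; intro k
  rw [PowerSeries.coeff_mul, map_sum]
  simp only [PowerSeries.coeff_mul]
  rw [coeff_toR, fmul]
  rw [Finset.Nat.sum_antidiagonal_eq_sum_range_succ_mk]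
  refine Finset.sum_congr rfl fun a _ => ?_
  rw [Finset.Nat.sum_antidiagonal_eq_sum_range_succ_mk]
  refine Finset.sum_congr rfl fun b _ => ?_
  simp [toR]

lemma toR_fpow (f : FPS) (m : ℕ) : toR (fpow f m) = toR f ^ m := by
  induction m with
  | zero => simpa [fpow] using toR_one
  | succ n ih => rw [fpow, toR_fmul, ih, pow_succ]; ring

lemma toR_d1 (f : FPS) : toR (d1 f) = PowerSeries.derivativeFun (toR f) := by
  apply PowerSeries.ext; intro j
  apply PowerSeries.ext; intro k
  rw [show (toR f).derivativeFun = PowerSeries.derivative _ (toR f) from rfl,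
    PowerSeries.coeff_derivativeFun, mul_comm]
  have h : ((j : PowerSeries ℂ) + 1) = PowerSeries.C ((j : ℂ) + 1) := by
    rw [map_add, map_natCast, map_one]
  rw [h, PowerSeries.coeff_C_mul]
  simp [toR, d1]
/-! ### Ring identities for `fmul` -/

lemma fmul_comm (f g : FPS) : fmul f g = fmul g f := by
  apply toR_inj; rw [toR_fmul, toR_fmul]; ring

lemma fmul_assoc (f g h : FPS) : fmul (fmul f g) h = fmul f (fmul g h) := by
  apply toR_inj; rw [toR_fmul, toR_fmul, toR_fmul, toR_fmul]; ring

lemma fmul_one (f : FPS) : fmul f oneF = f := by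
  apply toR_inj; rw [toR_fmul, toR_one]; ring

lemma one_fmul (f : FPS) : fmul oneF f = f := by
  apply toR_inj; rw [toR_fmul, toR_one]; ring

lemma add_fmul (f g h : FPS) : fmul (f + g) h = fmul f h + fmul g h := by
  apply toR_inj; rw [toR_add, toR_fmul, toR_add, toR_fmul, toR_fmul]; ring

lemma fmul_add (f g h : FPS) : fmul f (g + h) = fmul f g + fmul f h := by
  apply toR_inj; rw [toR_fmul, toR_add, toR_add, toR_fmul, toR_fmul]; ring

lemma sub_fmul (f g h : FPS) : fmul (f - g) h = fmul f h - fmul g h := by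
  apply toR_inj; rw [toR_sub, toR_fmul, toR_sub, toR_fmul, toR_fmul]; ring

lemma fmul_sub (f g h : FPS) : fmul f (g - h) = fmul f g - fmul f h := by
  apply toR_inj; rw [toR_fmul, toR_sub, toR_sub, toR_fmul, toR_fmul]; ring

lemma neg_fmul (f g : FPS) : fmul (-f) g = -fmul f g := by
  apply toR_inj; rw [toR_neg, toR_fmul, toR_neg, toR_fmul]; ring

lemma fmul_neg (f g : FPS) : fmul f (-g) = -fmul f g := by
  apply toR_inj; rw [toR_fmul, toR_neg, toR_neg, toR_fmul]; ring

lemma smul_fmul (c : ℂ) (f g : FPS) : fmul (c • f) g = c • fmul f g := by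
  apply toR_inj; rw [toR_smul, toR_fmul, toR_smul, toR_fmul]; ring

lemma fmul_smul (c : ℂ) (f g : FPS) : fmul f (c • g) = c • fmul f g := by
  apply toR_inj; rw [toR_fmul, toR_smul, toR_smul, toR_fmul]; ring

lemma d1_fmul (f g : FPS) : d1 (fmul f g) = fmul (d1 f) g + fmul f (d1 g) := by
  apply toR_inj
  rw [toR_d1, toR_fmul, PowerSeries.derivativeFun_mul, toR_add, toR_fmul, toR_fmul,
    toR_d1, toR_d1, smul_eq_mul, smul_eq_mul]
  ring

lemma d1_oneF : d1 oneF = 0 := by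
  funext j k; simp [d1, oneF]

lemma d1_add (f g : FPS) : d1 (f + g) = d1 f + d1 g := by
  funext j k; simp [d1]; ring

lemma d1_smul (c : ℂ) (f : FPS) : d1 (c • f) = c • d1 f := by
  funext j k; simp [d1]; ring

lemma fmul_zero (f : FPS) : fmul f (0 : FPS) = 0 := by
  funext j k; simp [fmul]

lemma d1_fpow (u : FPS) (m : ℕ) :
    d1 (fpow u (m + 1)) = ((m : ℂ) + 1) • fmul (fpow u m) (d1 u) := by
  induction m with
  | zero =>
    show d1 (fmul u (fpow u 0)) = _
    simp [show fpow u 0 = oneF from rfl, d1_fmul, d1_oneF, fmul_one, fmul_zero, one_fmul]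
  | succ n ih =>
    show d1 (fmul u (fpow u (n + 1))) = _
    rw [d1_fmul, ih, fmul_smul, show fpow u (n+1) = fmul u (fpow u n) from rfl]
    rw [fmul_comm (d1 u) (fmul u (fpow u n)), ← fmul_assoc, fmul_comm u (fpow u n),
      fmul_assoc (fpow u n) u (d1 u)]
    have : ∀ a : FPS, a + ((n : ℂ) + 1) • a = ((n : ℂ) + 1 + 1) • a := by
      intro a; funext j k
      simp [Pi.smul_apply, smul_eq_mul]; ring
    rw [this]
    push_cast
    ring_nf
/-! ### The `plus`, `minus`, `swapI` operators -/

section PlusMinus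

variable {l : ℂ}

lemma plus_minus (hl0 : l ≠ 0) (f : FPS) : plus l (minus l f) = f := by
  funext j k
  simp only [plus, minus, ← mul_assoc, ← zpow_add₀ hl0]
  simp

lemma minus_plus (hl0 : l ≠ 0) (f : FPS) : minus l (plus l f) = f := by
  funext j k
  simp only [plus, minus, ← mul_assoc, ← zpow_add₀ hl0]
  simp

lemma plus_fmul (hl0 : l ≠ 0) (f g : FPS) : plus l (fmul f g) = fmul (plus l f) (plus l g) := by
  funext j k
  simp only [plus, fmul, Finset.mul_sum]
  refine Finset.sum_congr rfl fun a ha => Finset.sum_congr rfl fun b hb => ?_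
  have ha' : a ≤ j := Nat.lt_succ_iff.mp (Finset.mem_range.mp ha)
  have hb' : b ≤ k := Nat.lt_succ_iff.mp (Finset.mem_range.mp hb)
  have : ((j : ℤ) - k) = ((a : ℤ) - b) + (((j - a : ℕ) : ℤ) - ((k - b : ℕ) : ℤ)) := by
    push_cast [Nat.cast_sub ha', Nat.cast_sub hb']; ring
  rw [this, zpow_add₀ hl0]
  ring

lemma minus_fmul (hl0 : l ≠ 0) (f g : FPS) : minus l (fmul f g) = fmul (minus l f) (minus l g) := by
  funext j k
  simp only [minus, fmul, Finset.mul_sum]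
  refine Finset.sum_congr rfl fun a ha => Finset.sum_congr rfl fun b hb => ?_
  have ha' : a ≤ j := Nat.lt_succ_iff.mp (Finset.mem_range.mp ha)
  have hb' : b ≤ k := Nat.lt_succ_iff.mp (Finset.mem_range.mp hb)
  have : ((k : ℤ) - j) = ((b : ℤ) - a) + (((k - b : ℕ) : ℤ) - ((j - a : ℕ) : ℤ)) := by
    push_cast [Nat.cast_sub ha', Nat.cast_sub hb']; ring
  rw [this, zpow_add₀ hl0]
  ring

lemma plus_oneF : plus l oneF = oneF := by
  funext j k
  by_cases hj : j = 0 <;> by_cases hk : k = 0 <;> simp [plus, oneF, hj, hk]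

lemma minus_oneF : minus l oneF = oneF := by
  funext j k
  by_cases hj : j = 0 <;> by_cases hk : k = 0 <;> simp [minus, oneF, hj, hk]

lemma plus_fpow (hl0 : l ≠ 0) (u : FPS) (m : ℕ) : plus l (fpow u m) = fpow (plus l u) m := by
  induction m with
  | zero => exact plus_oneF
  | succ n ih => show plus l (fmul u (fpow u n)) = fmul (plus l u) (fpow (plus l u) n)
                 rw [plus_fmul hl0, ih]

lemma minus_fpow (hl0 : l ≠ 0) (u : FPS) (m : ℕ) : minus l (fpow u m) = fpow (minus l u) m := by
  induction m with
  | zero => exact minus_oneF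
  | succ n ih => show minus l (fmul u (fpow u n)) = fmul (minus l u) (fpow (minus l u) n)
                 rw [minus_fmul hl0, ih]

lemma plus_add (f g : FPS) : plus l (f + g) = plus l f + plus l g := by
  funext j k; simp [plus]; ring

lemma minus_add (f g : FPS) : minus l (f + g) = minus l f + minus l g := by
  funext j k; simp [minus]; ring

lemma plus_sub (f g : FPS) : plus l (f - g) = plus l f - plus l g := by
  funext j k; simp [plus]; ring

lemma minus_sub (f g : FPS) : minus l (f - g) = minus l f - minus l g := by
  funext j k; simp [minus]; ring

lemma plus_neg (f : FPS) : plus l (-f) = -plus l f := by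
  funext j k; simp [plus]

lemma minus_neg (f : FPS) : minus l (-f) = -minus l f := by
  funext j k; simp [minus]

lemma plus_smul (c : ℂ) (f : FPS) : plus l (c • f) = c • plus l f := by
  funext j k; simp [plus, smul_eq_mul]; ring

lemma minus_smul (c : ℂ) (f : FPS) : minus l (c • f) = c • minus l f := by
  funext j k; simp [minus, smul_eq_mul]; ring

lemma plus_subst2 (hl0 : l ≠ 0) (F u v : FPS) :
    plus l (subst2 F u v) = subst2 F (plus l u) (plus l v) := by
  funext j k
  have : ∀ m n : ℕ, ∀ j k : ℕ, l ^ ((j:ℤ) - k) * (F m n * fmul (fpow u m) (fpow v n) j k)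
      = F m n * fmul (fpow (plus l u) m) (fpow (plus l v) n) j k := by
    intro m n j k
    rw [← plus_fpow hl0, ← plus_fpow hl0, ← plus_fmul hl0]
    simp [plus]; ring
  simp only [plus, subst2, Finset.mul_sum]
  exact Finset.sum_congr rfl fun m _ => Finset.sum_congr rfl fun n _ => this m n j k

lemma minus_subst2 (hl0 : l ≠ 0) (F u v : FPS) :
    minus l (subst2 F u v) = subst2 F (minus l u) (minus l v) := by
  funext j k
  have : ∀ m n : ℕ, ∀ j k : ℕ, l ^ ((k:ℤ) - j) * (F m n * fmul (fpow u m) (fpow v n) j k)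
      = F m n * fmul (fpow (minus l u) m) (fpow (minus l v) n) j k := by
    intro m n j k
    rw [← minus_fpow hl0, ← minus_fpow hl0, ← minus_fmul hl0]
    simp [minus]; ring
  simp only [minus, subst2, Finset.mul_sum]
  exact Finset.sum_congr rfl fun m _ => Finset.sum_congr rfl fun n _ => this m n j k

lemma d1_minus (hl0 : l ≠ 0) (f : FPS) : d1 (minus l f) = l⁻¹ • minus l (d1 f) := by
  funext j k
  simp only [d1, minus, Pi.smul_apply, smul_eq_mul]
  have : ((k : ℤ) - (j + 1 : ℕ)) = -1 + ((k : ℤ) - j) := by push_cast; ring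
  rw [this, zpow_add₀ hl0, zpow_neg_one]
  ring

lemma d1_plus (hl0 : l ≠ 0) (f : FPS) : d1 (plus l f) = l • plus l (d1 f) := by
  funext j k
  simp only [d1, plus, Pi.smul_apply, smul_eq_mul]
  have : (((j + 1 : ℕ) : ℤ) - k) = 1 + ((j : ℤ) - k) := by push_cast; ring
  rw [this, zpow_add₀ hl0, zpow_one]
  ring

end PlusMinus

/-! ### `swapI` lemmas -/

lemma swapI_add (f g : FPS) : swapI (f + g) = swapI f + swapI g := rfl

lemma swapI_sub (f g : FPS) : swapI (f - g) = swapI f - swapI g := rfl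

lemma swapI_neg (f : FPS) : swapI (-f) = -swapI f := rfl

lemma swapI_smul (c : ℂ) (f : FPS) : swapI (c • f) = c • swapI f := rfl

lemma swapI_plus (l : ℂ) (f : FPS) : swapI (plus l f) = minus l (swapI f) := rfl

lemma swapI_minus (l : ℂ) (f : FPS) : swapI (minus l f) = plus l (swapI f) := rfl

lemma swapI_d1 (f : FPS) : swapI (d1 f) = d2 (swapI f) := rfl

lemma swapI_d2 (f : FPS) : swapI (d2 f) = d1 (swapI f) := rfl

lemma swapI_fmul (f g : FPS) : swapI (fmul f g) = fmul (swapI f) (swapI g) := by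
  funext j k
  show fmul f g k j = _
  rw [fmul, Finset.sum_comm]
  rfl

lemma swapI_oneF : swapI oneF = oneF := by
  funext j k
  by_cases hj : j = 0 <;> by_cases hk : k = 0 <;> simp [swapI, oneF, hj, hk]

lemma swapI_fpow (u : FPS) (m : ℕ) : swapI (fpow u m) = fpow (swapI u) m := by
  induction m with
  | zero => exact swapI_oneF
  | succ n ih => show swapI (fmul u (fpow u n)) = _
                 rw [swapI_fmul, ih]; rfl

lemma swapI_subst2 (F u v : FPS) :
    swapI (subst2 F u v) = subst2 F (swapI u) (swapI v) := by
  funext j k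
  show subst2 F u v k j = _
  rw [subst2, subst2]
  rw [show k + j = j + k from Nat.add_comm k j]
  refine Finset.sum_congr rfl fun m _ => Finset.sum_congr rfl fun n _ => ?_
  rw [← swapI_fpow, ← swapI_fpow, ← swapI_fmul]
  rfl

lemma swapI_substOne (q : OPS) (u : FPS) :
    swapI (substOne q u) = substOne q (swapI u) := by
  funext j k
  show substOne q u k j = _
  rw [substOne, substOne, show k + j = j + k from Nat.add_comm k j]
  refine Finset.sum_congr rfl fun m _ => ?_
  rw [← swapI_fpow]
  rfl

lemma subst2_swap (F u v : FPS) : subst2 F u v = subst2 (swapI F) v u := by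
  funext j k
  rw [subst2, subst2, Finset.sum_comm]
  refine Finset.sum_congr rfl fun m _ => Finset.sum_congr rfl fun n _ => ?_
  rw [fmul_comm]
  rfl
/-! ### Vanishing of powers, extended substitution sums, inverses -/

lemma fpow_vanish {u : FPS} (hu : u 0 0 = 0) :
    ∀ m j k, j + k < m → fpow u m j k = 0 := by
  intro m
  induction m with
  | zero => intro j k h; omega
  | succ n ih =>
    intro j k h
    show fmul u (fpow u n) j k = 0
    rw [fmul]
    refine Finset.sum_eq_zero fun a ha => Finset.sum_eq_zero fun b hb => ?_
    have ha' : a ≤ j := Nat.lt_succ_iff.mp (Finset.mem_range.mp ha)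
    have hb' : b ≤ k := Nat.lt_succ_iff.mp (Finset.mem_range.mp hb)
    by_cases h0 : a = 0 ∧ b = 0
    · rw [h0.1, h0.2, hu, zero_mul]
    · have : (j - a) + (k - b) < n := by omega
      rw [ih _ _ this, mul_zero]

lemma fmul_fpow_vanish {u v : FPS} (hu : u 0 0 = 0) (hv : v 0 0 = 0)
    {m n j k : ℕ} (h : j + k < m + n) :
    fmul (fpow u m) (fpow v n) j k = 0 := by
  rw [fmul]
  refine Finset.sum_eq_zero fun a ha => Finset.sum_eq_zero fun b hb => ?_
  have ha' : a ≤ j := Nat.lt_succ_iff.mp (Finset.mem_range.mp ha)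
  have hb' : b ≤ k := Nat.lt_succ_iff.mp (Finset.mem_range.mp hb)
  by_cases hm : a + b < m
  · rw [fpow_vanish hu m a b hm, zero_mul]
  · have : (j - a) + (k - b) < n := by omega
    rw [fpow_vanish hv n _ _ this, mul_zero]

lemma subst2_eq {u v : FPS} (hu : u 0 0 = 0) (hv : v 0 0 = 0) (G : FPS)
    {j k N : ℕ} (hN : j + k ≤ N) :
    subst2 G u v j k
      = ∑ m ∈ Finset.range (N + 1), ∑ n ∈ Finset.range (N + 1),
          G m n * fmul (fpow u m) (fpow v n) j k := by
  rw [subst2]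
  have hsub : Finset.range (j + k + 1) ⊆ Finset.range (N + 1) :=
    Finset.range_subset_range.mpr (by omega)
  rw [Finset.sum_subset hsub ?h1]
  case h1 =>
    intro m _ hm
    have hm' : j + k < m := by
      have := Finset.mem_range.not.mp hm; omega
    refine Finset.sum_eq_zero fun n _ => ?_
    rw [fmul_fpow_vanish hu hv (by omega), mul_zero]
  refine Finset.sum_congr rfl fun m _ => ?_
  rw [Finset.sum_subset hsub ?h2]
  case h2 =>
    intro n _ hn
    have hn' : j + k < n := by
      have := Finset.mem_range.not.mp hn; omega
    rw [fmul_fpow_vanish hu hv (by omega), mul_zero]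

lemma subst2_zero (G u v : FPS) : subst2 G u v 0 0 = G 0 0 := by
  rw [subst2]
  simp [fmul, fpow, oneF]

/-! ### Multiplicative inverse -/

lemma fmul_finv {h : FPS} (h0 : h 0 0 ≠ 0) : fmul h (finv h) = oneF := by
  set u : FPS := fun a b => if a = 0 ∧ b = 0 then 0 else -(h a b) * (h 0 0)⁻¹ with hu_def
  have hu0 : u 0 0 = 0 := by simp [hu_def]
  set inv2 : FPS := fun j k => ∑ m ∈ Finset.range (j + k + 1), fpow u m j k with hinv2
  have hinv2' : ∀ j k, inv2 j k = ∑ m ∈ Finset.range (j + k + 1), fpow u m j k := fun _ _ => rfl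
  have h_eq : h = (h 0 0) • (oneF - u) := by
    funext a b
    by_cases h0' : a = 0 ∧ b = 0
    · simp [h0'.1, h0'.2, hu_def, oneF]
    · have : oneF a b = 0 := by simp [oneF, h0']
      simp only [Pi.smul_apply, Pi.sub_apply, this, hu_def, if_neg h0', smul_eq_mul]
      field_simp
      ring
  have hfinv : finv h = (h 0 0)⁻¹ • inv2 := by
    funext j k
    simp [finv, hinv2, hu_def, smul_eq_mul]
  have key : fmul (oneF - u) inv2 = oneF := by
    funext j k
    rw [sub_fmul, one_fmul]
    have hmul : fmul u inv2 j k = ∑ m ∈ Finset.range (j + k + 1), fpow u (m + 1) j k := by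
      rw [fmul]
      calc ∑ a ∈ Finset.range (j + 1), ∑ b ∈ Finset.range (k + 1), u a b * inv2 (j-a) (k-b)
          = ∑ a ∈ Finset.range (j + 1), ∑ b ∈ Finset.range (k + 1),
              ∑ m ∈ Finset.range (j + k + 1), u a b * fpow u m (j-a) (k-b) := by
            refine Finset.sum_congr rfl fun a ha => Finset.sum_congr rfl fun b hb => ?_
            have ha' : a ≤ j := Nat.lt_succ_iff.mp (Finset.mem_range.mp ha)
            have hb' : b ≤ k := Nat.lt_succ_iff.mp (Finset.mem_range.mp hb)
            rw [hinv2' (j-a) (k-b), Finset.mul_sum]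
            rw [Finset.sum_subset (Finset.range_subset_range.mpr
              (by omega : (j-a)+(k-b)+1 ≤ j+k+1))]
            intro m _ hm
            have : (j - a) + (k - b) < m := by
              have := Finset.mem_range.not.mp hm; omega
            rw [fpow_vanish hu0 m _ _ this, mul_zero]
        _ = ∑ a ∈ Finset.range (j + 1), ∑ m ∈ Finset.range (j + k + 1),
              ∑ b ∈ Finset.range (k + 1), u a b * fpow u m (j-a) (k-b) := by
            exact Finset.sum_congr rfl fun a _ => Finset.sum_comm
        _ = ∑ m ∈ Finset.range (j + k + 1), ∑ a ∈ Finset.range (j + 1),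
              ∑ b ∈ Finset.range (k + 1), u a b * fpow u m (j-a) (k-b) := Finset.sum_comm
        _ = ∑ m ∈ Finset.range (j + k + 1), fpow u (m + 1) j k := by
            exact Finset.sum_congr rfl fun m _ => rfl
    simp only [Pi.sub_apply, hmul]
    have h1 : inv2 j k = fpow u 0 j k + ∑ m ∈ Finset.range (j + k), fpow u (m + 1) j k := by
      rw [hinv2' j k, Finset.sum_range_succ' (fun m => fpow u m j k) (j + k)]
      ring
    have h2 : ∑ m ∈ Finset.range (j + k + 1), fpow u (m + 1) j k
        = ∑ m ∈ Finset.range (j + k), fpow u (m + 1) j k := by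
      rw [Finset.sum_range_succ, fpow_vanish hu0 (j + k + 1) j k (by omega), add_zero]
    rw [h1, h2, add_sub_cancel_right]
    rfl
  calc fmul h (finv h) = fmul ((h 0 0) • (oneF - u)) ((h 0 0)⁻¹ • inv2) := by
        rw [← h_eq, ← hfinv]
    _ = oneF := by
        rw [smul_fmul, fmul_smul, key, smul_smul, mul_inv_cancel₀ h0, one_smul]

lemma fmul_fdiv {h : FPS} (h0 : h 0 0 ≠ 0) (f : FPS) : fmul h (fdiv f h) = f := by
  rw [fdiv, fmul_comm f (finv h), ← fmul_assoc, fmul_finv h0, one_fmul]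

lemma fmul_left_cancel {P : FPS} (h0 : P 0 0 ≠ 0) {x y : FPS}
    (h : fmul P x = fmul P y) : x = y := by
  have := congrArg (fun t => fmul (finv P) t) h
  simp only [← fmul_assoc] at this
  rw [fmul_comm (finv P) P, fmul_finv h0, one_fmul, one_fmul] at this
  exact this
/-! ### Chain rule for `subst2` -/

lemma zero_fmul (g : FPS) : fmul (0 : FPS) g = 0 := by
  funext j k; simp [fmul]

lemma fmul_sum {ι : Type*} (s : Finset ι) (f : ι → FPS) (w : FPS) :
    fmul (∑ i ∈ s, f i) w = ∑ i ∈ s, fmul (f i) w := by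
  classical
  induction s using Finset.induction_on with
  | empty => simpa using zero_fmul w
  | insert a s h ih => rw [Finset.sum_insert h, add_fmul, ih, Finset.sum_insert h]

lemma fmul_congr_left {f f' : FPS} {j k : ℕ}
    (h : ∀ a b, a ≤ j → b ≤ k → f a b = f' a b) (w : FPS) :
    fmul f w j k = fmul f' w j k := by
  rw [fmul, fmul]
  refine Finset.sum_congr rfl fun a ha => Finset.sum_congr rfl fun b hb => ?_
  rw [h a b (Nat.lt_succ_iff.mp (Finset.mem_range.mp ha))
    (Nat.lt_succ_iff.mp (Finset.mem_range.mp hb))]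

lemma fmul_subst2_left {u v : FPS} (hu : u 0 0 = 0) (hv : v 0 0 = 0) (G w : FPS)
    {j k N : ℕ} (hN : j + k ≤ N) :
    fmul (subst2 G u v) w j k
      = ∑ m ∈ Finset.range (N + 1), ∑ n ∈ Finset.range (N + 1),
          G m n * fmul (fmul (fpow u m) (fpow v n)) w j k := by
  set T : FPS := ∑ m ∈ Finset.range (N + 1), ∑ n ∈ Finset.range (N + 1),
      G m n • fmul (fpow u m) (fpow v n) with hT
  have hTval : ∀ a b : ℕ, a + b ≤ N → subst2 G u v a b = T a b := by
    intro a b hab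
    rw [subst2_eq hu hv G hab, hT]
    simp only [Finset.sum_apply, Pi.smul_apply, smul_eq_mul]
  rw [fmul_congr_left (fun a b ha hb => hTval a b (by omega)) w, hT, fmul_sum]
  simp only [Finset.sum_apply]
  refine Finset.sum_congr rfl fun m _ => ?_
  rw [fmul_sum]
  simp only [Finset.sum_apply]
  refine Finset.sum_congr rfl fun n _ => ?_
  rw [smul_fmul]
  simp [smul_eq_mul]

lemma fmul_fpow_fpow_left_vanish {u v : FPS} (hu : u 0 0 = 0) (hv : v 0 0 = 0)
    (w : FPS) {m n j k : ℕ} (h : j + k < m + n) :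
    fmul (fmul (fpow u m) (fpow v n)) w j k = 0 := by
  rw [fmul]
  refine Finset.sum_eq_zero fun a ha => Finset.sum_eq_zero fun b hb => ?_
  have ha' : a ≤ j := Nat.lt_succ_iff.mp (Finset.mem_range.mp ha)
  have hb' : b ≤ k := Nat.lt_succ_iff.mp (Finset.mem_range.mp hb)
  rw [fmul_fpow_vanish hu hv (by omega), zero_mul]

lemma fmul_rearr (f g w : FPS) : fmul (fmul f w) g = fmul (fmul f g) w := by
  rw [fmul_assoc, fmul_comm w g, ← fmul_assoc]

lemma d1d2_comm (G : FPS) : d2 (d1 G) = d1 (d2 G) := by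
  funext j k
  simp [d1, d2]; ring

lemma d1_subst2 {u v : FPS} (hu : u 0 0 = 0) (hv : v 0 0 = 0) (G : FPS) :
    d1 (subst2 G u v)
      = fmul (subst2 (d1 G) u v) (d1 u) + fmul (subst2 (d2 G) u v) (d1 v) := by
  funext j k
  set N := j + k + 1 with hNdef
  have lhs_eq : d1 (subst2 G u v) j k
      = ∑ m ∈ Finset.range (N + 1), ∑ n ∈ Finset.range (N + 1),
          G m n * (d1 (fmul (fpow u m) (fpow v n)) j k) := by
    have h0 : d1 (subst2 G u v) j k = ((j + 1 : ℕ) : ℂ) * subst2 G u v (j + 1) k := rfl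
    rw [h0, subst2, show (j + 1) + k + 1 = N + 1 by omega, Finset.mul_sum]
    refine Finset.sum_congr rfl fun m _ => ?_
    rw [Finset.mul_sum]
    refine Finset.sum_congr rfl fun n _ => ?_
    show ((j + 1 : ℕ) : ℂ) * (G m n * fmul (fpow u m) (fpow v n) (j + 1) k)
      = G m n * (((j + 1 : ℕ) : ℂ) * fmul (fpow u m) (fpow v n) (j + 1) k)
    ring
  have split : ∀ m n : ℕ, d1 (fmul (fpow u m) (fpow v n)) j k
      = fmul (d1 (fpow u m)) (fpow v n) j k + fmul (fpow u m) (d1 (fpow v n)) j k := by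
    intro m n; rw [d1_fmul]; rfl
  show d1 (subst2 G u v) j k = _
  rw [lhs_eq]
  simp only [split, mul_add, Finset.sum_add_distrib]
  have half1 : ∑ m ∈ Finset.range (N + 1), ∑ n ∈ Finset.range (N + 1),
        G m n * fmul (d1 (fpow u m)) (fpow v n) j k
      = fmul (subst2 (d1 G) u v) (d1 u) j k := by
    rw [fmul_subst2_left hu hv (d1 G) (d1 u) (by omega : j + k ≤ N)]
    rw [Finset.sum_comm]
    rw [show (∑ n ∈ Finset.range (N+1), ∑ m ∈ Finset.range (N+1),
        G m n * fmul (d1 (fpow u m)) (fpow v n) j k)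
      = ∑ n ∈ Finset.range (N+1), ∑ m ∈ Finset.range (N+1),
        d1 G m n * fmul (fmul (fpow u m) (fpow v n)) (d1 u) j k from ?_]
    · exact Finset.sum_comm
    refine Finset.sum_congr rfl fun n _ => ?_
    rw [Finset.sum_range_succ' (fun m => G m n * fmul (d1 (fpow u m)) (fpow v n) j k) N]
    rw [Finset.sum_range_succ (fun m => d1 G m n * fmul (fmul (fpow u m) (fpow v n)) (d1 u) j k) N]
    have hz1 : G 0 n * fmul (d1 (fpow u 0)) (fpow v n) j k = 0 := by
      rw [show d1 (fpow u 0) = d1 oneF from rfl, d1_oneF, zero_fmul]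
      simp
    have hz2 : d1 G N n * fmul (fmul (fpow u N) (fpow v n)) (d1 u) j k = 0 := by
      rw [fmul_fpow_fpow_left_vanish hu hv _ (by omega), mul_zero]
    rw [hz1, hz2, add_zero, add_zero]
    refine Finset.sum_congr rfl fun m _ => ?_
    rw [d1_fpow, smul_fmul, fmul_rearr]
    have : d1 G m n = ((m : ℂ) + 1) * G (m + 1) n := by
      show ((m + 1 : ℕ) : ℂ) * G (m + 1) n = _
      push_cast; ring
    rw [this]
    simp only [Pi.smul_apply, smul_eq_mul]
    ring
  have half2 : ∑ m ∈ Finset.range (N + 1), ∑ n ∈ Finset.range (N + 1),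
        G m n * fmul (fpow u m) (d1 (fpow v n)) j k
      = fmul (subst2 (d2 G) u v) (d1 v) j k := by
    rw [fmul_subst2_left hu hv (d2 G) (d1 v) (by omega : j + k ≤ N)]
    refine Finset.sum_congr rfl fun m _ => ?_
    rw [Finset.sum_range_succ' (fun n => G m n * fmul (fpow u m) (d1 (fpow v n)) j k) N]
    rw [Finset.sum_range_succ (fun n => d2 G m n * fmul (fmul (fpow u m) (fpow v n)) (d1 v) j k) N]
    have hz1 : G m 0 * fmul (fpow u m) (d1 (fpow v 0)) j k = 0 := by
      rw [show d1 (fpow v 0) = d1 oneF from rfl, d1_oneF, fmul_zero]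
      simp
    have hz2 : d2 G m N * fmul (fmul (fpow u m) (fpow v N)) (d1 v) j k = 0 := by
      rw [fmul_fpow_fpow_left_vanish hu hv _ (by omega), mul_zero]
    rw [hz1, hz2, add_zero, add_zero]
    refine Finset.sum_congr rfl fun n _ => ?_
    rw [d1_fpow, fmul_smul, fmul_comm (fpow u m) (fmul (fpow v n) (d1 v)), fmul_rearr,
      fmul_comm (fpow v n) (fpow u m)]
    have : d2 G m n = ((n : ℂ) + 1) * G m (n + 1) := by
      show ((n + 1 : ℕ) : ℂ) * G m (n + 1) = _
      push_cast; ring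
    rw [this]
    simp only [Pi.smul_apply, smul_eq_mul]
    ring
  rw [half1, half2]
  rfl
/-! ### Homological equation lemmas -/

lemma zpow_ne_one_of_ne_zero {l : ℂ} (hl0 : l ≠ 0) (hru : ∀ n : ℕ, 0 < n → l ^ n ≠ 1)
    {z : ℤ} (hz : z ≠ 0) : l ^ z ≠ 1 := by
  rcases Int.lt_or_lt_of_ne hz with h | h
  · intro hcon
    have : l ^ (-z) = 1 := by
      rw [zpow_neg, hcon, inv_one]
    obtain ⟨n, hn⟩ : ∃ n : ℕ, (-z : ℤ) = n := ⟨(-z).toNat, by omega⟩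
    rw [hn, zpow_natCast] at this
    exact hru n (by omega) this
  · intro hcon
    obtain ⟨n, hn⟩ : ∃ n : ℕ, (z : ℤ) = n := ⟨z.toNat, by omega⟩
    rw [hn, zpow_natCast] at hcon
    exact hru n (by omega) hcon

lemma nabPlus_Eplus {l : ℂ} (hl0 : l ≠ 0) (hru : ∀ n : ℕ, 0 < n → l ^ n ≠ 1) (g : FPS) :
    nabPlus l (Eplus l g) = g - Pip g := by
  funext j k
  show Eplus l g j k - l * (l ^ ((j : ℤ) - k) * Eplus l g j k) = g j k - Pip g j k
  by_cases hk : k = j + 1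
  · simp [Eplus, Pip, hk]
  · have hd : (1 : ℂ) - l ^ ((j : ℤ) - k + 1) ≠ 0 := by
      intro hcon
      have : l ^ ((j : ℤ) - k + 1) = 1 := by linear_combination -hcon
      exact zpow_ne_one_of_ne_zero hl0 hru (by omega) this
    have hEp : Eplus l g j k = g j k / (1 - l ^ ((j : ℤ) - k + 1)) := by
      simp [Eplus, hk]
    have hPip : Pip g j k = 0 := by simp [Pip, hk]
    rw [hEp, hPip, sub_zero]
    have hpow : l * l ^ ((j : ℤ) - k) = l ^ ((j : ℤ) - k + 1) := by
      rw [zpow_add₀ hl0, zpow_one]; ring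
    rw [← mul_assoc, hpow]
    field_simp

lemma nab_Emin {l : ℂ} (hl0 : l ≠ 0) (hru : ∀ n : ℕ, 0 < n → l ^ n ≠ 1) (g : FPS) :
    nab l (Emin l g) = g - Pim g := by
  funext j k
  show l ^ ((k : ℤ) - j) * Emin l g j k - l⁻¹ * Emin l g j k = g j k - Pim g j k
  by_cases hj : j = k + 1
  · simp [Emin, Pim, hj]
  · have hd : l ^ ((k : ℤ) - j) - l⁻¹ ≠ 0 := by
      intro hcon
      have h1 : l ^ ((k : ℤ) - j) = l⁻¹ := by linear_combination hcon
      have h2 : l ^ ((k : ℤ) - j + 1) = 1 := by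
        rw [zpow_add₀ hl0, zpow_one, h1, inv_mul_cancel₀ hl0]
      exact zpow_ne_one_of_ne_zero hl0 hru (by omega) h2
    have hEm : Emin l g j k = g j k / (l ^ ((k : ℤ) - j) - l⁻¹) := by
      simp [Emin, hj]
    have hPim : Pim g j k = 0 := by simp [Pim, hj]
    rw [hEm, hPim, sub_zero]
    have hrw : l ^ ((k : ℤ) - j) * (g j k / (l ^ ((k : ℤ) - j) - l⁻¹))
        - l⁻¹ * (g j k / (l ^ ((k : ℤ) - j) - l⁻¹))
        = (l ^ ((k : ℤ) - j) - l⁻¹) * (g j k / (l ^ ((k : ℤ) - j) - l⁻¹)) := by ring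
    rw [hrw, ← mul_div_assoc, mul_div_cancel_left₀ _ hd]

lemma Pip_sub (f g : FPS) : Pip (f - g) = Pip f - Pip g := by
  funext j k
  by_cases hk : k = j + 1 <;> simp [Pip, hk]

lemma Pip_add (f g : FPS) : Pip (f + g) = Pip f + Pip g := by
  funext j k
  by_cases hk : k = j + 1 <;> simp [Pip, hk]

lemma Pim_sub (f g : FPS) : Pim (f - g) = Pim f - Pim g := by
  funext j k
  by_cases hj : j = k + 1 <;> simp [Pim, hj]

lemma Pip_self_sub (f : FPS) : Pip (f - Pip f) = 0 := by
  funext j k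
  by_cases hk : k = j + 1 <;> simp [Pip, hk]

lemma Pim_self_sub (f : FPS) : Pim (f - Pim f) = 0 := by
  funext j k
  by_cases hj : j = k + 1 <;> simp [Pim, hj]

lemma nabPlus_neg (l : ℂ) (f : FPS) : nabPlus l (-f) = -nabPlus l f := by
  funext j k
  simp [nabPlus, plus]
  ring

lemma nabPlus_sub (l : ℂ) (f g : FPS) : nabPlus l (f - g) = nabPlus l f - nabPlus l g := by
  funext j k
  simp [nabPlus, plus]
  ring

lemma Pip_inv_minus {l : ℂ} (hl0 : l ≠ 0) (f : FPS) :
    Pip (l⁻¹ • minus l f) = Pip f := by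
  funext j k
  by_cases hk : k = j + 1
  · have : ((k : ℤ) - j) = 1 := by omega
    simp only [Pip, if_pos hk, Pi.smul_apply, minus, this, zpow_one, smul_eq_mul]
    field_simp
  · simp [Pip, hk]
/-! ### Constant-term computations -/

lemma Sq_one_one (q : OPS) : Sq q 1 1 = q 0 / 4 + q 2 / 2 := by
  have hfs : ∀ j k, fpow halfSum 2 j k
      = ∑ a ∈ Finset.range (j+1), ∑ b ∈ Finset.range (k+1),
          halfSum a b * fmul halfSum oneF (j-a) (k-b) := fun j k => rfl
  simp only [Sq, fmul, substOne, Finset.sum_range_succ, Finset.sum_range_zero]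
  norm_num [fpow, fmul, oneF, halfSum, halfDiff, cosSeries, Finset.sum_range_succ]
  ring

lemma fmul_zero_zero (f g : FPS) : fmul f g 0 0 = f 0 0 * g 0 0 := by
  simp [fmul]

lemma d1_phi_zero_zero {φ : FPS} (hφ : normalized φ) : d1 φ 0 0 = 1 := by
  simp [d1, hφ.2.1]

lemma minus_zero_zero (l : ℂ) (f : FPS) : minus l f 0 0 = f 0 0 := by
  simp [minus]

lemma plus_zero_zero (l : ℂ) (f : FPS) : plus l f 0 0 = f 0 0 := by
  simp [plus]

lemma hFun_zero_zero {l : ℂ} {q : OPS} {φ : FPS} (hφ : normalized φ) :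
    hFun l q φ 0 0 = Sq q 1 1 := by
  rw [hFun, fmul_zero_zero, fmul_zero_zero, subst2_zero, minus_zero_zero,
    d1_phi_zero_zero hφ]
  simp [d1, d2]
/-! ### Symmetry of the generating function -/

lemma swapI_halfSum : swapI halfSum = halfSum := by
  funext j k
  simp only [swapI, halfSum]
  split_ifs with h1 h2 h3 h4 h5 <;> first | rfl | omega

lemma swapI_halfDiff : swapI halfDiff = -halfDiff := by
  funext j k
  simp only [swapI, halfDiff, Pi.neg_apply]
  by_cases h1 : j = 1 ∧ k = 0
  · simp [h1.1, h1.2]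
  · by_cases h2 : j = 0 ∧ k = 1
    · simp [h2.1, h2.2]
    · have hA : ¬(k = 1 ∧ j = 0) := fun hc => h2 ⟨hc.2, hc.1⟩
      have hB : ¬(k = 0 ∧ j = 1) := fun hc => h1 ⟨hc.2, hc.1⟩
      rw [if_neg hA, if_neg hB, if_neg h1, if_neg h2]
      simp

lemma fpow_neg (u : FPS) (m : ℕ) : fpow (-u) m = ((-1 : ℂ) ^ m) • fpow u m := by
  induction m with
  | zero => show oneF = ((-1:ℂ)^0) • oneF; simp
  | succ n ih =>
    show fmul (-u) (fpow (-u) n) = _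
    rw [ih, neg_fmul, fmul_smul]
    show -((-1:ℂ)^n • fmul u (fpow u n)) = ((-1:ℂ)^(n+1)) • fmul u (fpow u n)
    rw [← neg_smul]
    congr 1
    ring

lemma substOne_cos_neg (u : FPS) :
    substOne cosSeries (-u) = substOne cosSeries u := by
  funext j k
  rw [substOne, substOne]
  refine Finset.sum_congr rfl fun m _ => ?_
  by_cases hm : m % 2 = 0
  · rw [fpow_neg]
    have : ((-1 : ℂ) ^ m) = 1 := by
      have : Even m := Nat.even_iff.mpr hm
      exact this.neg_one_pow
    rw [this, one_smul]
  · have : cosSeries m = 0 := by simp [cosSeries, hm]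
    rw [this, zero_mul, zero_mul]

lemma swapI_Sq (q : OPS) : swapI (Sq q) = Sq q := by
  rw [Sq, swapI_fmul, swapI_substOne, swapI_substOne, swapI_halfSum, swapI_halfDiff,
    substOne_cos_neg]
/-! ### Structure of `Err`, `dErr` and the key identities -/

section MainLemmas

variable {l : ℂ} {qs : OPS} {φ : FPS}

lemma dErr_add (l : ℂ) (qs : OPS) (φ : FPS) (x y : FPS) :
    dErr l qs φ (x + y) = dErr l qs φ x + dErr l qs φ y := by
  unfold dErr
  rw [minus_add, plus_add, fmul_add, fmul_add, fmul_add, fmul_add]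
  abel

lemma dErr_smul (l : ℂ) (qs : OPS) (φ : FPS) (c : ℂ) (x : FPS) :
    dErr l qs φ (c • x) = c • dErr l qs φ x := by
  unfold dErr
  rw [minus_smul, plus_smul, fmul_smul, fmul_smul, fmul_smul, fmul_smul]
  rw [smul_add, smul_add, smul_add]

lemma swapI_Err (hsym : swapI φ = φ) : swapI (Err l qs φ) = Err l qs φ := by
  rw [Err, swapI_add, swapI_subst2, swapI_subst2, swapI_minus, swapI_plus, hsym]
  rw [subst2_swap (d2 (Sq qs)) (plus l φ) φ, swapI_d2, swapI_Sq]
  rw [subst2_swap (d1 (Sq qs)) φ (minus l φ), swapI_d1, swapI_Sq]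
  show _ = subst2 (d2 (Sq qs)) (minus l φ) φ + subst2 (d1 (Sq qs)) φ (plus l φ)
  exact add_comm _ _

lemma swapI_d1d2_Sq : swapI (d1 (d2 (Sq qs))) = d1 (d2 (Sq qs)) := by
  rw [swapI_d1, swapI_d2, swapI_Sq, d1d2_comm]

lemma swapI_d2d2_Sq : swapI (d2 (d2 (Sq qs))) = d1 (d1 (Sq qs)) := by
  rw [swapI_d2, swapI_d2, swapI_Sq]

lemma swapI_d1d1_Sq : swapI (d1 (d1 (Sq qs))) = d2 (d2 (Sq qs)) := by
  rw [swapI_d1, swapI_d1, swapI_Sq]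

lemma swapI_dErr (hsym : swapI φ = φ) (u : FPS) :
    swapI (dErr l qs φ u) = dErr l qs φ (swapI u) := by
  unfold dErr
  rw [swapI_add, swapI_add, swapI_add, swapI_fmul, swapI_fmul, swapI_fmul, swapI_fmul,
    swapI_subst2, swapI_subst2, swapI_subst2, swapI_subst2, swapI_minus, swapI_minus,
    swapI_plus, swapI_plus, hsym]
  rw [subst2_swap (d1 (d2 (Sq qs))) (plus l φ) φ, swapI_d1d2_Sq]
  rw [subst2_swap (d2 (d2 (Sq qs))) (plus l φ) φ, swapI_d2d2_Sq]
  rw [subst2_swap (d1 (d1 (Sq qs))) φ (minus l φ), swapI_d1d1_Sq]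
  rw [subst2_swap (d1 (d2 (Sq qs))) φ (minus l φ), swapI_d1d2_Sq]
  abel

lemma d1_Err_expand (hl0 : l ≠ 0) (hφ0 : φ 0 0 = 0) :
    d1 (Err l qs φ)
      = l⁻¹ • fmul (subst2 (d1 (d2 (Sq qs))) (minus l φ) φ) (minus l (d1 φ))
        + fmul (subst2 (d2 (d2 (Sq qs))) (minus l φ) φ) (d1 φ)
        + (fmul (subst2 (d1 (d1 (Sq qs))) φ (plus l φ)) (d1 φ)
        + l • fmul (subst2 (d1 (d2 (Sq qs))) φ (plus l φ)) (plus l (d1 φ))) := by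
  have hm0 : (minus l φ) 0 0 = 0 := by rw [minus_zero_zero, hφ0]
  have hp0 : (plus l φ) 0 0 = 0 := by rw [plus_zero_zero, hφ0]
  rw [Err, d1_add, d1_subst2 hm0 hφ0 (d2 (Sq qs)), d1_subst2 hφ0 hp0 (d1 (Sq qs))]
  rw [d1_minus hl0, d1_plus hl0, fmul_smul, fmul_smul, d1d2_comm]

lemma d1_F_expand (hl0 : l ≠ 0) (hφ0 : φ 0 0 = 0) :
    d1 (subst2 (Sq qs) (minus l φ) φ)
      = l⁻¹ • fmul (subst2 (d1 (Sq qs)) (minus l φ) φ) (minus l (d1 φ))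
        + fmul (subst2 (d2 (Sq qs)) (minus l φ) φ) (d1 φ) := by
  have hm0 : (minus l φ) 0 0 = 0 := by rw [minus_zero_zero, hφ0]
  rw [d1_subst2 hm0 hφ0 (Sq qs), d1_minus hl0, fmul_smul]

lemma Pip_d1F (hl0 : l ≠ 0) (hφ0 : φ 0 0 = 0) :
    Pip (d1 (subst2 (Sq qs) (minus l φ) φ)) = Pip (fmul (Err l qs φ) (d1 φ)) := by
  rw [d1_F_expand hl0 hφ0, Pip_add]
  have hmin : fmul (subst2 (d1 (Sq qs)) (minus l φ) φ) (minus l (d1 φ))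
      = minus l (fmul (subst2 (d1 (Sq qs)) φ (plus l φ)) (d1 φ)) := by
    rw [minus_fmul hl0, minus_subst2 hl0, minus_plus hl0]
  rw [hmin, Pip_inv_minus hl0]
  rw [Err, add_fmul, Pip_add, add_comm]

lemma magic (hl0 : l ≠ 0) (hφ0 : φ 0 0 = 0) (ξ : FPS) :
    fmul (d1 φ) (dErr l qs φ (fmul (d1 φ) ξ))
      = nabPlus l (fmul (hFun l qs φ) (nab l ξ))
        + fmul (fmul (d1 φ) ξ) (d1 (Err l qs φ)) := by
  rw [d1_Err_expand hl0 hφ0]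
  unfold dErr hFun nabPlus nab
  have hC : (PowerSeries.C (PowerSeries.C l : PowerSeries ℂ))
      * (PowerSeries.C (PowerSeries.C l⁻¹ : PowerSeries ℂ)) = 1 := by
    rw [← map_mul, ← map_mul, mul_inv_cancel₀ hl0, map_one, map_one]
  apply toR_inj
  simp only [minus_fmul hl0, plus_fmul hl0, minus_sub, plus_sub, minus_smul, plus_smul,
    minus_add, plus_add, minus_subst2 hl0, plus_subst2 hl0, minus_plus hl0, plus_minus hl0,
    toR_add, toR_sub, toR_neg, toR_smul, toR_fmul]
  linear_combination (-(toR (subst2 (d1 (d2 (Sq qs))) φ (plus l φ))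
      * toR (plus l (d1 φ)) * toR (d1 φ) * toR (plus l ξ))) * hC

lemma key (hl0 : l ≠ 0) (hru : ∀ n : ℕ, 0 < n → l ^ n ≠ 1)
    (hq0 : qs 0 = 1) (hs0 : (1 + 2 * qs 2) / 4 ≠ (0 : ℂ))
    (hφ : normalized φ) :
    Err l qs φ + dErr l qs φ (wFun l qs φ) = R4Fun l qs φ := by
  have hφ0 : φ 0 0 = 0 := hφ.1
  have hP0 : d1 φ 0 0 ≠ 0 := by rw [d1_phi_zero_zero hφ]; exact one_ne_zero
  have hh0 : hFun l qs φ 0 0 ≠ 0 := by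
    rw [hFun_zero_zero hφ, Sq_one_one, hq0]
    intro hc; apply hs0; linear_combination hc
  set ψ := psiFun l qs φ with hψdef
  set hh := hFun l qs φ with hhdef
  set qd := fdiv ψ hh with hqddef
  set ξ := Emin l (qd - Pim qd) with hξdef
  have hw : wFun l qs φ = fmul (d1 φ) ξ := rfl
  have hnab : nab l ξ = qd - Pim qd := by
    rw [hξdef, nab_Emin hl0 hru, Pim_self_sub, sub_zero]
  have hhnab : fmul hh (nab l ξ) = ψ - fmul hh (Pim qd) := by
    rw [hnab, fmul_sub, hqddef, fmul_fdiv hh0]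
  have hnψ : nabPlus l ψ
      = -(fmul (Err l qs φ) (d1 φ)) + Pip (fmul (Err l qs φ) (d1 φ)) := by
    rw [hψdef]
    show nabPlus l (-(Eplus l (fmul (Err l qs φ) (d1 φ) - Pip (fmul (Err l qs φ) (d1 φ))))) = _
    rw [nabPlus_neg, nabPlus_Eplus hl0 hru, Pip_self_sub, sub_zero, neg_sub]
    abel
  apply fmul_left_cancel hP0
  rw [fmul_add, hw, magic hl0 hφ0 ξ]
  have hR4 : fmul (d1 φ) (R4Fun l qs φ)
      = fmul (d1 (Err l qs φ)) (wFun l qs φ) + R3Fun l qs φ := by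
    rw [R4Fun, fmul_add]
    rw [show fmul (d1 φ) (fmul (d1 (Err l qs φ)) (fdiv (wFun l qs φ) (d1 φ)))
        = fmul (d1 (Err l qs φ)) (fmul (d1 φ) (fdiv (wFun l qs φ) (d1 φ))) from by
      rw [← fmul_assoc, fmul_comm (d1 φ) (d1 (Err l qs φ)), fmul_assoc]]
    rw [fmul_fdiv hP0, fmul_fdiv hP0]
  rw [hR4]
  have hR3 : R3Fun l qs φ
      = Pip (fmul (Err l qs φ) (d1 φ)) - nabPlus l (fmul hh (Pim qd)) := by
    rw [R3Fun, Pip_d1F hl0 hφ0]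
  rw [hR3, hhnab, nabPlus_sub, hnψ, hw]
  rw [fmul_comm (d1 φ) (Err l qs φ), fmul_comm (fmul (d1 φ) ξ) (d1 (Err l qs φ))]
  abel

end MainLemmas
/-- With `Δφ = (w + w∘I)/2`, `R₃`, `R₄` as in the construction:
`ℰ(q*,φ) + ∂_φℰ(q*,φ)(Δφ) = (R₄ + R₄∘I)/2`. -/
theorem symmetrized_linearized_solution
    (l : ℂ) (hl : ‖l‖ = 1) (hru : ∀ n : ℕ, 0 < n → l ^ n ≠ 1)
    (hl2 : l ^ 2 ≠ 1)
    (qs : OPS) (hq0 : qs 0 = 1) (hs0 : (1 + 2 * qs 2) / 4 ≠ (0 : ℂ))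
    (φ : FPS) (hφ : normalized φ) (hsym : swapI φ = φ) :
    Err l qs φ
        + dErr l qs φ ((2 : ℂ)⁻¹ • (wFun l qs φ + swapI (wFun l qs φ))) =
      (2 : ℂ)⁻¹ • (R4Fun l qs φ + swapI (R4Fun l qs φ)) := by
  have hl0 : l ≠ 0 := by
    intro hc
    rw [hc] at hl
    simp at hl
  have hkey : Err l qs φ + dErr l qs φ (wFun l qs φ) = R4Fun l qs φ :=
    key hl0 hru hq0 hs0 hφ
  have hswapkey : swapI (R4Fun l qs φ)
      = Err l qs φ + dErr l qs φ (swapI (wFun l qs φ)) := by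
    rw [← hkey, swapI_add, swapI_Err hsym, swapI_dErr hsym]
  rw [dErr_smul, dErr_add, hswapkey, ← hkey]
  funext j k
  simp only [Pi.add_apply, Pi.smul_apply, smul_eq_mul]
  ring

end Treschev

end
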